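/- For all real x ≥ 2, the series Σ_{n≥1} (1/n) Σ_{j=0}^{n} C(n,j)·C(2j,j)·(−1/x)^j converges (absolutely in n after summing the inner finite sum) and equals ln x. -/

import Mathlib

open MeasureTheory intervalIntegral Real Set Filter


lemma myIntLog {b : ℝ} (hb : 0 ≤ b) : IntervalIntegrable Real.log volume 0 b := by
  rw [intervalIntegrable_iff, uIoc_of_le hb]
  have h1 : IntervalIntegrable (fun θ : ℝ => 2 * θ ^ (-(1:ℝ)/2) + (b+1)) volume 0 b :=
    ((intervalIntegrable_rpow' (by norm_num)).const_mul 2).add intervalIntegrable_const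
  rw [intervalIntegrable_iff, uIoc_of_le hb] at h1
  refine h1.mono' Real.measurable_log.aestronglyMeasurable ?_
  filter_upwards [ae_restrict_mem measurableSet_Ioc] with θ hθ
  have hθ0 : 0 < θ := hθ.1
  have hrp : (0:ℝ) < θ ^ (-(1:ℝ)/2) := Real.rpow_pos_of_pos hθ0 _
  rcases le_or_gt θ 1 with h | h
  · have hlog : Real.log θ ≤ 0 := Real.log_nonpos hθ0.le h
    have : -Real.log θ ≤ 2 * θ ^ (-(1:ℝ)/2) := by
      have h2 : Real.log (θ ^ (-(1:ℝ)/2)) = (-(1:ℝ)/2) * Real.log θ := Real.log_rpow hθ0 _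
      have h3 : Real.log (θ ^ (-(1:ℝ)/2)) ≤ θ ^ (-(1:ℝ)/2) - 1 := Real.log_le_sub_one_of_pos hrp
      nlinarith
    rw [Real.norm_eq_abs, abs_of_nonpos hlog]
    nlinarith
  · have hlog : 0 ≤ Real.log θ := Real.log_nonneg h.le
    have : Real.log θ ≤ b := (Real.log_le_sub_one_of_pos hθ0).trans (by linarith [hθ.2])
    rw [Real.norm_eq_abs, abs_of_nonneg hlog]
    nlinarith


lemma sin_lower {θ : ℝ} (h1 : 0 ≤ θ) (h2 : θ ≤ π) :
    2 / π ^ 2 * (θ * (π - θ)) ≤ Real.sin θ := by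
  have hπ := Real.pi_pos
  rcases le_or_gt θ (π/2) with h | h
  · have h3 := Real.mul_le_sin h1 h
    have key : 2 / π ^ 2 * (θ * (π - θ)) ≤ 2 / π * θ := by
      rw [div_mul_eq_mul_div, div_mul_eq_mul_div, div_le_div_iff₀ (by positivity) (by positivity)]
      nlinarith [mul_nonneg (mul_nonneg hπ.le h1) h1]
    linarith
  · have h1' : 0 ≤ π - θ := by linarith
    have h2' : π - θ ≤ π / 2 := by linarith
    have h3 := Real.mul_le_sin h1' h2'
    rw [Real.sin_pi_sub] at h3
    have key : 2 / π ^ 2 * (θ * (π - θ)) ≤ 2 / π * (π - θ) := by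
      rw [div_mul_eq_mul_div, div_mul_eq_mul_div, div_le_div_iff₀ (by positivity) (by positivity)]
      nlinarith [mul_nonneg (mul_nonneg hπ.le h1') h1']
    linarith

lemma intLogSin : IntervalIntegrable (fun θ => Real.log (Real.sin θ)) volume 0 π := by
  have hπ := Real.pi_pos
  rw [intervalIntegrable_iff, uIoc_of_le hπ.le]
  have hg : IntervalIntegrable
      (fun θ : ℝ => -Real.log (2 / π ^ 2) - Real.log θ - Real.log (π - θ)) volume 0 π := by
    have h2 : IntervalIntegrable (fun θ : ℝ => Real.log (π - θ)) volume 0 π := by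
      have := ((myIntLog hπ.le).comp_sub_left π)
      simpa using this.symm
    exact (intervalIntegrable_const.sub (myIntLog hπ.le)).sub h2
  rw [intervalIntegrable_iff, uIoc_of_le hπ.le] at hg
  refine hg.mono' (Real.measurable_log.comp Real.measurable_sin).aestronglyMeasurable ?_
  filter_upwards [ae_restrict_mem measurableSet_Ioc] with θ hθ
  have hθ0 : 0 < θ := hθ.1
  have hθπ : θ ≤ π := hθ.2
  have hs1 : Real.sin θ ≤ 1 := Real.sin_le_one θ
  have hsl := sin_lower hθ0.le hθπ
  rcases eq_or_lt_of_le hθπ with rfl | hθπ'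
  · simp only [Real.sin_pi, Real.log_zero, norm_zero]
    have l2 : Real.log (π - π) = 0 := by simp
    have l3 : Real.log (2 / π ^ 2) = -Real.log (π ^ 2 / 2) := by
      rw [← Real.log_inv]; norm_num
    have l4 : Real.log π ≤ Real.log (π ^ 2 / 2) := by
      apply Real.log_le_log hπ; nlinarith [Real.pi_gt_three]
    rw [l2, l3]; linarith
  · have hs0 : 0 < Real.sin θ := Real.sin_pos_of_pos_of_lt_pi hθ0 hθπ'
    have hlow : Real.log (2 / π ^ 2) + Real.log θ + Real.log (π - θ) ≤ Real.log (Real.sin θ) := by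
      have hπθ : 0 < π - θ := by linarith
      have hp : Real.log (2 / π ^ 2 * (θ * (π - θ))) ≤ Real.log (Real.sin θ) :=
        Real.log_le_log (mul_pos (by positivity) (mul_pos hθ0 hπθ)) hsl
      rw [Real.log_mul (by positivity) (by positivity), Real.log_mul (ne_of_gt hθ0) (ne_of_gt hπθ)] at hp
      linarith
    have hup : Real.log (Real.sin θ) ≤ 0 := Real.log_nonpos hs0.le hs1
    rw [Real.norm_eq_abs, abs_of_nonpos hup]
    linarith


lemma intLogSin' {a b : ℝ} (ha : a ∈ Icc 0 π) (hb : b ∈ Icc 0 π) :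
    IntervalIntegrable (fun θ => Real.log (Real.sin θ)) volume a b := by
  apply intLogSin.mono_set
  rw [uIcc_of_le Real.pi_pos.le]
  exact uIcc_subset_Icc ha hb

lemma intLogCos : IntervalIntegrable (fun θ => Real.log (Real.cos θ)) volume 0 π := by
  have hπ := Real.pi_pos
  -- log cos θ = log sin (θ + π/2)
  have hfun : (fun θ : ℝ => Real.log (Real.cos θ)) = fun θ => Real.log (Real.sin (θ + π/2)) := by
    funext θ; rw [Real.sin_add_pi_div_two]
  rw [hfun]
  have h1 : IntervalIntegrable (fun θ => Real.log (Real.sin θ)) volume (π/2) π := by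
    apply intLogSin.mono_set; rw [uIcc_of_le (by linarith), uIcc_of_le hπ.le]
    exact Icc_subset_Icc (by linarith) le_rfl
  have h2 : IntervalIntegrable (fun θ => Real.log (Real.sin θ)) volume π (3*π/2) := by
    have hfun2 : (fun θ : ℝ => Real.log (Real.sin θ)) = fun θ => Real.log (Real.sin (θ - π)) := by
      funext θ; rw [Real.sin_sub_pi, Real.log_neg_eq_log]
    rw [hfun2]
    have h3 : IntervalIntegrable (fun θ => Real.log (Real.sin θ)) volume 0 (π/2) := by
      apply intLogSin.mono_set; rw [uIcc_of_le (by linarith), uIcc_of_le hπ.le]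
      exact Icc_subset_Icc le_rfl (by linarith)
    have := h3.comp_sub_right π
    rw [show (0:ℝ)+π = π by ring, show π/2+π = 3*π/2 by ring] at this
    exact this
  have h12 := h1.trans h2
  have := h12.comp_add_right (π/2)
  rw [show π/2-π/2 = (0:ℝ) by ring, show 3*π/2-π/2 = π by ring] at this
  exact this


lemma ae_ne_pi_div_two : ∀ᵐ x : ℝ, x ≠ π / 2 := by
  rw [ae_iff]
  have : {x : ℝ | ¬x ≠ π / 2} = {π / 2} := by ext y; simp
  rw [this]
  exact measure_singleton _

lemma logsin_integral : ∫ θ in (0:ℝ)..π, Real.log (Real.sin θ) = -π * Real.log 2 := by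
  have hπ := Real.pi_pos
  have hmem0 : (0:ℝ) ∈ Icc 0 π := ⟨le_rfl, hπ.le⟩
  have hmemh : π/2 ∈ Icc 0 π := ⟨by linarith, by linarith⟩
  have hmemπ : π ∈ Icc 0 π := ⟨hπ.le, le_rfl⟩
  set A := ∫ θ in (0:ℝ)..(π/2), Real.log (Real.sin θ) with hA
  have hB : ∫ θ in (0:ℝ)..(π/2), Real.log (Real.cos θ) = A := by
    have hcongr : ∫ θ in (0:ℝ)..(π/2), Real.log (Real.cos θ)
        = ∫ θ in (0:ℝ)..(π/2), Real.log (Real.sin (π/2 - θ)) := by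
      apply integral_congr; intro θ _; simp only [Real.sin_pi_div_two_sub]
    rw [hcongr, integral_comp_sub_left (fun θ => Real.log (Real.sin θ)) (π/2)]
    norm_num
    rfl
  have h1 : ∫ θ in (π/2)..π, Real.log (Real.sin θ) = A := by
    have hcongr : ∫ θ in (0:ℝ)..(π/2), Real.log (Real.sin θ)
        = ∫ θ in (0:ℝ)..(π/2), Real.log (Real.sin (π - θ)) := by
      apply integral_congr; intro θ _; simp only [Real.sin_pi_sub]
    rw [hA, hcongr, integral_comp_sub_left (fun θ => Real.log (Real.sin θ)) π,
      show π - π/2 = π/2 by ring, sub_zero]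
  have hsplit : ∫ θ in (0:ℝ)..π, Real.log (Real.sin θ) = 2 * A := by
    rw [← integral_add_adjacent_intervals (intLogSin' hmem0 hmemh) (intLogSin' hmemh hmemπ), h1]
    ring
  have hdou : ∫ x in (0:ℝ)..(π/2), Real.log (Real.sin (2*x)) = A := by
    rw [integral_comp_mul_left (fun θ => Real.log (Real.sin θ)) (two_ne_zero),
      show (2:ℝ)*0 = 0 by ring, show (2:ℝ)*(π/2) = π by ring, hsplit, smul_eq_mul]
    ring
  have hexp : ∫ x in (0:ℝ)..(π/2), Real.log (Real.sin (2*x))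
      = π/2 * Real.log 2 + A + A := by
    have hae : ∀ᵐ x : ℝ, x ∈ Set.uIoc (0:ℝ) (π/2) →
        Real.log (Real.sin (2*x)) = Real.log 2 + Real.log (Real.sin x) + Real.log (Real.cos x) := by
      filter_upwards [ae_ne_pi_div_two] with x hx hmem
      rw [uIoc_of_le (by linarith)] at hmem
      have hs : 0 < Real.sin x := Real.sin_pos_of_pos_of_lt_pi hmem.1 (by linarith [hmem.2])
      have hc : 0 < Real.cos x :=
        Real.cos_pos_of_mem_Ioo ⟨by linarith [hmem.1], lt_of_le_of_ne hmem.2 hx⟩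
      rw [Real.sin_two_mul, Real.log_mul (by positivity) (ne_of_gt hc),
        Real.log_mul two_ne_zero (ne_of_gt hs)]
    rw [integral_congr_ae hae]
    have hint2 : IntervalIntegrable (fun θ => Real.log (Real.cos θ)) volume 0 (π/2) := by
      apply intLogCos.mono_set
      rw [uIcc_of_le (by linarith), uIcc_of_le hπ.le]
      exact Icc_subset_Icc le_rfl (by linarith)
    rw [integral_add ((_root_.intervalIntegrable_const).add (intLogSin' hmem0 hmemh)) hint2,
      integral_add _root_.intervalIntegrable_const (intLogSin' hmem0 hmemh), intervalIntegral.integral_const, hB]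
    simp only [smul_eq_mul]
    ring
  have hAval : A = -(π/2) * Real.log 2 := by
    have := hdou.symm.trans hexp
    linarith
  rw [hsplit, hAval]; ring


lemma central_prod (n : ℕ) :
    ∏ i ∈ Finset.range n, ((2*(i:ℝ)+1)/(2*i+2)) = ((2*n).choose n : ℝ) / 4^n := by
  induction n with
  | zero => simp
  | succ k ih =>
    rw [Finset.prod_range_succ, ih]
    have h := Nat.succ_mul_centralBinom_succ k
    have h' : ((k:ℝ)+1) * ((2*(k+1)).choose (k+1) : ℝ) = 2*(2*(k:ℝ)+1) * ((2*k).choose k : ℝ) := by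
      exact_mod_cast h
    have hk1 : ((k:ℝ)+1) ≠ 0 := by positivity
    have h4 : (4:ℝ)^k ≠ 0 := by positivity
    push_cast
    rw [div_mul_div_comm, div_eq_div_iff (by positivity) (by positivity)]
    push_cast
    linear_combination (-2*(4:ℝ)^k) * h'

lemma sin_pow_integral (j : ℕ) :
    ∫ θ in (0:ℝ)..π, Real.sin θ ^ (2*j) = π * (((2*j).choose j : ℝ) / 4^j) := by
  rw [integral_sin_pow_even, central_prod]

lemma expand_pow (x : ℝ) (hx0 : x ≠ 0) (m : ℕ) :
    ∫ θ in (0:ℝ)..π, (1 - 4 * Real.sin θ^2 / x)^m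
      = π * ∑ j ∈ Finset.range (m+1),
          (m.choose j : ℝ) * ((2*j).choose j : ℝ) * (-1/x) ^ j := by
  have hexp : ∀ θ : ℝ, (1 - 4 * Real.sin θ^2 / x)^m
      = ∑ j ∈ Finset.range (m+1), (-4/x)^j * Real.sin θ^(2*j) * (m.choose j : ℝ) := by
    intro θ
    have : (1 : ℝ) - 4 * Real.sin θ^2 / x = (-4/x) * Real.sin θ^2 + 1 := by ring
    rw [this, add_pow]
    apply Finset.sum_congr rfl
    intro j _
    rw [mul_pow, one_pow, pow_mul]
    ring
  simp only [hexp]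
  rw [intervalIntegral.integral_finset_sum]
  · rw [Finset.mul_sum]
    apply Finset.sum_congr rfl
    intro j _
    rw [intervalIntegral.integral_mul_const, intervalIntegral.integral_const_mul, sin_pow_integral]
    have key : ((-4:ℝ)/x)^j / 4^j = (-1/x)^j := by
      rw [← div_pow]
      congr 1
      field_simp
    rw [← key]
    ring
  · intro j _
    apply Continuous.intervalIntegrable
    continuity


lemma ae_sin_ne : ∀ᵐ t : ℝ, Real.sin t ≠ 0 := by
  rw [ae_iff]
  have h1 : {t : ℝ | ¬Real.sin t ≠ 0} ⊆ Set.range (fun n : ℤ => (n:ℝ)*π) := by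
    intro t ht
    simp only [mem_setOf_eq, not_not] at ht
    rcases Real.sin_eq_zero_iff.mp ht with ⟨n, hn⟩
    exact ⟨n, hn⟩
  exact measure_mono_null h1 ((Set.countable_range _).measure_zero _)

lemma ae_cos_ne : ∀ᵐ t : ℝ, Real.cos t ≠ 0 := by
  rw [ae_iff]
  have h1 : {t : ℝ | ¬Real.cos t ≠ 0} ⊆ Set.range (fun n : ℤ => (2*(n:ℝ)+1)*π/2) := by
    intro t ht
    simp only [mem_setOf_eq, not_not] at ht
    rcases Real.cos_eq_zero_iff.mp ht with ⟨n, hn⟩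
    exact ⟨n, hn.symm⟩
  exact measure_mono_null h1 ((Set.countable_range _).measure_zero _)

/-- For every real `x ≥ 2`, the series
`Σ_{n≥1} (1/n) Σ_{j=0}^n C(n,j) C(2j,j) (-1/x)^j` converges to `ln x`. -/
theorem log_eq_double_series_of_two_le (x : ℝ) (hx : 2 ≤ x) :
    HasSum (fun n : ℕ =>
      (1 / (n + 1 : ℝ)) *
        ∑ j ∈ Finset.range (n + 2),
          ((n + 1).choose j : ℝ) * ((2 * j).choose j : ℝ) * (-1 / x) ^ j)
      (Real.log x) := by
  have hπ := Real.pi_pos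
  have hx0 : (0:ℝ) < x := by linarith
  -- key pointwise facts
  have hfacts : ∀ t : ℝ, t ∈ Ioc (0:ℝ) π → Real.sin t ≠ 0 → Real.cos t ≠ 0 →
      0 < Real.sin t ∧ Real.sin t ^ 2 < 1 ∧ |1 - 4 * Real.sin t ^ 2 / x| < 1 := by
    intro t ht hs hc
    have hs0 : 0 < Real.sin t :=
      lt_of_le_of_ne (Real.sin_nonneg_of_nonneg_of_le_pi ht.1.le ht.2) (Ne.symm hs)
    have hc2 : 0 < Real.cos t ^ 2 := by positivity
    have hsc := Real.sin_sq_add_cos_sq t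
    have hs2 : Real.sin t ^ 2 < 1 := by nlinarith
    refine ⟨hs0, hs2, abs_lt.mpr ⟨?_, ?_⟩⟩
    · rw [neg_lt, neg_sub]
      have : 4 * Real.sin t ^ 2 / x < 2 := by
        rw [div_lt_iff₀ hx0]; nlinarith
      linarith
    · have : 0 < 4 * Real.sin t ^ 2 / x := by positivity
      linarith
  have key : HasSum
      (fun n : ℕ => ∫ t in (0:ℝ)..π,
        (1 / (n + 1 : ℝ)) * (1 - 4 * Real.sin t ^ 2 / x) ^ (n + 1))
      (∫ t in (0:ℝ)..π,
        (Real.log x - 2 * Real.log 2 - 2 * Real.log (Real.sin t))) := by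
    refine intervalIntegral.hasSum_integral_of_dominated_convergence
      (fun n t => |1 - 4 * Real.sin t ^ 2 / x| ^ (n + 1) / (n + 1)) ?_ ?_ ?_ ?_ ?_
    · intro n
      apply Continuous.aestronglyMeasurable
      continuity
    · intro n
      filter_upwards with t _
      rw [Real.norm_eq_abs, abs_mul, abs_pow]
      rw [abs_of_nonneg (by positivity : (0:ℝ) ≤ 1 / (n + 1 : ℝ))]
      ring_nf
      rfl
    · filter_upwards [ae_sin_ne, ae_cos_ne] with t hs hc hmem
      rw [uIoc_of_le hπ.le] at hmem
      obtain ⟨_, _, habs⟩ := hfacts t hmem hs hc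
      exact (Real.hasSum_pow_div_log_of_abs_lt_one (by rwa [abs_abs])).summable
    · -- bound_integrable
      rw [intervalIntegrable_iff, uIoc_of_le hπ.le]
      have hGint : IntegrableOn
          (fun t => -Real.log (1 - |1 - 4 * Real.sin t ^ 2 / x|)) (Ioc 0 π) := by
        have hg2 : IntervalIntegrable
            (fun t => (Real.log x - Real.log 4) - 2 * Real.log (Real.sin t)
              - 2 * Real.log (Real.cos t)) volume 0 π :=
          (intervalIntegrable_const.sub (intLogSin.const_mul 2)).sub (intLogCos.const_mul 2)
        rw [intervalIntegrable_iff, uIoc_of_le hπ.le] at hg2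
        have hcont : Continuous fun t : ℝ => 1 - |1 - 4 * Real.sin t ^ 2 / x| := by
          continuity
        refine hg2.mono' ((Real.measurable_log.comp hcont.measurable).neg).aestronglyMeasurable ?_
        filter_upwards [ae_restrict_mem measurableSet_Ioc,
          ae_restrict_of_ae ae_sin_ne, ae_restrict_of_ae ae_cos_ne] with t hmem hs hc
        obtain ⟨hs0, hs2, habs⟩ := hfacts t hmem hs hc
        set r := 1 - 4 * Real.sin t ^ 2 / x with hr
        have hc2 : 0 < Real.cos t ^ 2 := by positivity
        have hsc := Real.sin_sq_add_cos_sq t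
        have h1r : 1 - r = 4 * Real.sin t ^ 2 / x := by rw [hr]; ring
        have h1rpos : 0 < 1 - r := by rw [h1r]; positivity
        have h2c : 2 * Real.cos t ^ 2 ≤ 1 + r := by
          rw [hr]
          have : 4 * Real.sin t ^ 2 / x ≤ 2 * Real.sin t ^ 2 := by
            rw [div_le_iff₀ hx0]; nlinarith [sq_nonneg (Real.sin t)]
          nlinarith
        have h2cpos : 0 < 2 * Real.cos t ^ 2 := by positivity
        have h1rapos : 0 < 1 - |r| := by linarith [habs]
        have hGnn : 0 ≤ -Real.log (1 - |r|) := by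
          rw [neg_nonneg]
          exact Real.log_nonpos h1rapos.le (by linarith [abs_nonneg r])
        rw [Real.norm_eq_abs, abs_of_nonneg hGnn]
        -- -log(1-|r|) ≤ log 2 - log(1-r) - log(1+r)
        have e1 : (1 - r) * (1 + r) / 2 ≤ 1 - |r| := by
          rw [div_le_iff₀ (by norm_num : (0:ℝ) < 2)]
          nlinarith [sq_nonneg (1 - |r|), sq_abs r]
        have e1pos : 0 < (1 - r) * (1 + r) / 2 := by
          have : 0 < 1 + r := lt_of_lt_of_le h2cpos h2c
          positivity
        have hlog1 : Real.log ((1 - r) * (1 + r) / 2) ≤ Real.log (1 - |r|) :=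
          Real.log_le_log e1pos e1
        have h1rr : 0 < 1 + r := lt_of_lt_of_le h2cpos h2c
        rw [Real.log_div (by positivity) (by norm_num),
          Real.log_mul (ne_of_gt h1rpos) (ne_of_gt h1rr)] at hlog1
        have hlog2 : Real.log (2 * Real.cos t ^ 2) ≤ Real.log (1 + r) :=
          Real.log_le_log h2cpos h2c
        rw [Real.log_mul (by norm_num) (ne_of_gt hc2), Real.log_pow] at hlog2
        have hlog3 : Real.log (1 - r) = Real.log 4 + 2 * Real.log (Real.sin t) - Real.log x := by
          rw [h1r, Real.log_div (by positivity) (ne_of_gt hx0),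
            Real.log_mul (by norm_num) (by positivity), Real.log_pow]
          push_cast; ring
        push_cast at hlog2
        linarith
      apply hGint.congr
      filter_upwards [ae_restrict_mem measurableSet_Ioc,
        ae_restrict_of_ae ae_sin_ne, ae_restrict_of_ae ae_cos_ne] with t hmem hs hc
      obtain ⟨_, _, habs⟩ := hfacts t hmem hs hc
      exact ((Real.hasSum_pow_div_log_of_abs_lt_one (by rwa [abs_abs])).tsum_eq).symm
    · -- h_lim
      filter_upwards [ae_sin_ne, ae_cos_ne] with t hs hc hmem
      rw [uIoc_of_le hπ.le] at hmem
      obtain ⟨hs0, hs2, habs⟩ := hfacts t hmem hs hc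
      have h := Real.hasSum_pow_div_log_of_abs_lt_one habs
      have hval : -Real.log (1 - (1 - 4 * Real.sin t ^ 2 / x))
          = Real.log x - 2 * Real.log 2 - 2 * Real.log (Real.sin t) := by
        rw [show 1 - (1 - 4 * Real.sin t ^ 2 / x) = 4 * Real.sin t ^ 2 / x by ring,
          Real.log_div (by positivity) (ne_of_gt hx0),
          Real.log_mul (by norm_num) (by positivity), Real.log_pow,
          show (4:ℝ) = 2^2 by norm_num, Real.log_pow]
        push_cast; ring
      rw [hval] at h
      refine h.congr_fun fun n => ?_
      ring
  -- Evaluate both sides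
  have hterm : (fun n : ℕ => ∫ t in (0:ℝ)..π,
      (1 / (n + 1 : ℝ)) * (1 - 4 * Real.sin t ^ 2 / x) ^ (n + 1))
      = fun n : ℕ => π * ((1 / (n + 1 : ℝ)) *
          ∑ j ∈ Finset.range (n + 2),
            ((n + 1).choose j : ℝ) * ((2 * j).choose j : ℝ) * (-1 / x) ^ j) := by
    funext n
    rw [intervalIntegral.integral_const_mul, expand_pow x (ne_of_gt hx0) (n+1)]
    ring
  have hIf : ∫ t in (0:ℝ)..π,
      (Real.log x - 2 * Real.log 2 - 2 * Real.log (Real.sin t)) = π * Real.log x := by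
    rw [intervalIntegral.integral_sub intervalIntegrable_const (intLogSin.const_mul 2),
      intervalIntegral.integral_const_mul, logsin_integral, intervalIntegral.integral_const]
    simp only [smul_eq_mul, sub_zero]
    ring
  rw [hterm, hIf] at key
  have final := key.mul_left π⁻¹
  simp only [← mul_assoc, inv_mul_cancel₀ (ne_of_gt hπ), one_mul] at final
  exact final
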